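/- Let ℓ_A = lcm(a₁,a₂,a₃) and k = ℓ_A/a₁ + ℓ_A/a₂ + ℓ_A/a₃ − ℓ_A (a positive integer, equal to χ_A·ℓ_A where χ_A = 1/a₁+1/a₂+1/a₃−1). Then c̃_A^{ℓ_A} = t_δ^{−k} as automorphisms of L̃. -/

import Mathlib

namespace AffineGRS

noncomputable section

/-- The vertex set `Ṽ_A` of the affine Coxeter--Dynkin diagram attached to a
triple `A = (a 0, a 1, a 2)`: it consists of `𝟙*`, `𝟙` and the branch vertices
`(i, j)` for `i ∈ {1,2,3}` and `1 ≤ j ≤ a i − 1` (coded by `Fin (a i - 1)`). -/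
inductive Vt (a : Fin 3 → ℕ) : Type where
  | star : Vt a
  | one  : Vt a
  | br   : (i : Fin 3) → Fin (a i - 1) → Vt a

def vtEquiv (a : Fin 3 → ℕ) : Vt a ≃ (Unit ⊕ Unit ⊕ (Σ i : Fin 3, Fin (a i - 1))) where
  toFun v :=
    match v with
    | Vt.star => Sum.inl ()
    | Vt.one => Sum.inr (Sum.inl ())
    | Vt.br i j => Sum.inr (Sum.inr ⟨i, j⟩)
  invFun x :=
    match x with
    | Sum.inl _ => Vt.star
    | Sum.inr (Sum.inl _) => Vt.one
    | Sum.inr (Sum.inr ⟨i, j⟩) => Vt.br i j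
  left_inv v := by cases v <;> rfl
  right_inv x := by rcases x with _ | (_ | ⟨i, j⟩) <;> rfl

instance (a : Fin 3 → ℕ) : DecidableEq (Vt a) := (vtEquiv a).decidableEq
instance (a : Fin 3 → ℕ) : Fintype (Vt a) := Fintype.ofEquiv _ (vtEquiv a).symm

/-- The entries `Ĩ(α_u, α_v)` of the Cartan form on the basis `{α_v : v ∈ Ṽ_A}`. -/
def cartan (a : Fin 3 → ℕ) : Vt a → Vt a → ℤ
  | Vt.star, Vt.star => 2
  | Vt.one, Vt.one => 2
  | Vt.star, Vt.one => 2
  | Vt.one, Vt.star => 2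
  | Vt.star, Vt.br _ j => if (j : ℕ) = 0 then -1 else 0
  | Vt.br _ j, Vt.star => if (j : ℕ) = 0 then -1 else 0
  | Vt.one, Vt.br _ j => if (j : ℕ) = 0 then -1 else 0
  | Vt.br _ j, Vt.one => if (j : ℕ) = 0 then -1 else 0
  | Vt.br i j, Vt.br i' j' =>
      if i = i' ∧ ((j : ℕ) = (j' : ℕ) + 1 ∨ (j' : ℕ) = (j : ℕ) + 1) then -1
      else if i = i' ∧ (j : ℕ) = (j' : ℕ) then 2 else 0

/-- The root lattice `L̃`: the free `ℤ`-module with basis `{α_v : v ∈ Ṽ_A}`. -/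
abbrev Lt (a : Fin 3 → ℕ) : Type := Vt a →₀ ℤ

/-- The basis vector `α_v ∈ L̃`. -/
def gen (a : Fin 3 → ℕ) (v : Vt a) : Lt a := Finsupp.single v 1

/-- The symmetric bilinear form `Ĩ` on `L̃`. -/
def Iform (a : Fin 3 → ℕ) (x y : Lt a) : ℤ :=
  x.sum fun u xu => y.sum fun v yv => xu * yv * cartan a u v

/-- `δ := α_{𝟙*} − α_𝟙`. -/
def delta (a : Fin 3 → ℕ) : Lt a := gen a Vt.star - gen a Vt.one

/-- The reflection `r_α(x) = x − Ĩ(α, x) α` (for `α` with `Ĩ(α,α) = 2`). -/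
def reflect (a : Fin 3 → ℕ) (α : Lt a) (x : Lt a) : Lt a := x - Iform a α x • α

/-- The composite `r_{α_{(i,1)}} ∘ r_{α_{(i,2)}} ∘ ⋯ ∘ r_{α_{(i, a i − 1)}}`. -/
def branchComp (a : Fin 3 → ℕ) (i : Fin 3) : Lt a → Lt a :=
  (List.finRange (a i - 1)).foldr (fun j f => reflect a (gen a (Vt.br i j)) ∘ f) id

/-- The Coxeter transformation
`c̃_A := r_{α_{𝟙*}} ∘ r_{α_𝟙} ∘ r_{α_{(1,1)}} ∘ ⋯ ∘ r_{α_{(3, a₃ − 1)}}`. -/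
def coxeter (a : Fin 3 → ℕ) : Lt a → Lt a :=
  reflect a (gen a Vt.star) ∘ reflect a (gen a Vt.one) ∘
    branchComp a 0 ∘ branchComp a 1 ∘ branchComp a 2

/-- A `ℤ`-bilinear form `χ` on `L̃` is an Euler form for `(L̃, Ĩ, c̃_A)` if
`Ĩ = χ + χᵀ` and `χ(λ, λ') = −χ(λ', c̃_A(λ))` (Serre duality). -/
def IsEulerForm (a : Fin 3 → ℕ) (χ : Lt a →ₗ[ℤ] Lt a →ₗ[ℤ] ℤ) : Prop :=
  (∀ x y : Lt a, Iform a x y = χ x y + χ y x) ∧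
  (∀ x y : Lt a, χ x y = - χ y (coxeter a x))

/-- The twist automorphism `t_δ(λ) = λ − χ(δ, λ) δ` (as a function). -/
def twist (a : Fin 3 → ℕ) (χ : Lt a →ₗ[ℤ] Lt a →ₗ[ℤ] ℤ) (x : Lt a) : Lt a :=
  x - χ (delta a) x • delta a

/-- The inverse of the twist automorphism, `λ ↦ λ + χ(δ, λ) δ`. -/
def twistInv (a : Fin 3 → ℕ) (χ : Lt a →ₗ[ℤ] Lt a →ₗ[ℤ] ℤ) (x : Lt a) : Lt a :=
  x + χ (delta a) x • delta a

/-- The simple reflections `r_{α_v}`, viewed as the set of `ℤ`-linear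
automorphisms of `L̃` whose underlying function is `reflect a (gen a v)`. -/
def weylGens (a : Fin 3 → ℕ) : Set (Lt a ≃ₗ[ℤ] Lt a) :=
  { g | ∃ v : Vt a, ∀ x : Lt a, g x = reflect a (gen a v) x }

/-- The affine Weyl group `W̃_A`, generated by the simple reflections. -/
def weyl (a : Fin 3 → ℕ) : Subgroup (Lt a ≃ₗ[ℤ] Lt a) := Subgroup.closure (weylGens a)

/-- The set of real roots `Δ̃_re = {w(α_v) : w ∈ W̃_A, v ∈ Ṽ_A}`. -/
def realRoots (a : Fin 3 → ℕ) : Set (Lt a) :=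
  { x | ∃ w ∈ weyl a, ∃ v : Vt a, x = w (gen a v) }

/-- The extended affine Weyl group `W̃_A^ext`, generated by `W̃_A` and `t_δ`. -/
def extWeyl (a : Fin 3 → ℕ) (χ : Lt a →ₗ[ℤ] Lt a →ₗ[ℤ] ℤ) :
    Subgroup (Lt a ≃ₗ[ℤ] Lt a) :=
  Subgroup.closure (weylGens a ∪ { g | ∀ x : Lt a, g x = twist a χ x })

section Basics

variable (a : Fin 3 → ℕ)

lemma Iform_add_left (x x' y : Lt a) :
    Iform a (x + x') y = Iform a x y + Iform a x' y := by
  unfold Iform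
  rw [Finsupp.sum_add_index']
  · intro u; simp
  · intro u z z'
    rw [← Finsupp.sum_add]
    congr 1; ext v w; ring

lemma Iform_smul_left (z : ℤ) (x y : Lt a) :
    Iform a (z • x) y = z * Iform a x y := by
  unfold Iform
  rw [Finsupp.sum_smul_index, Finsupp.mul_sum]
  · congr 1; ext u w
    rw [Finsupp.mul_sum]
    congr 1; ext v w'; ring
  · intro u; simp

lemma Iform_add_right (x y y' : Lt a) :
    Iform a x (y + y') = Iform a x y + Iform a x y' := by
  unfold Iform
  rw [← Finsupp.sum_add]
  congr 1; ext u w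
  rw [Finsupp.sum_add_index']
  · intro v; ring
  · intro v z z'; ring

lemma Iform_smul_right (z : ℤ) (x y : Lt a) :
    Iform a x (z • y) = z * Iform a x y := by
  unfold Iform
  rw [Finsupp.mul_sum]
  congr 1; ext u w
  rw [Finsupp.sum_smul_index, Finsupp.mul_sum]
  · congr 1; ext v w'; ring
  · intro v; ring

/-- `Iform` as a bundled bilinear map. -/
def I2 : Lt a →ₗ[ℤ] Lt a →ₗ[ℤ] ℤ :=
  LinearMap.mk₂ ℤ (Iform a) (Iform_add_left a) (Iform_smul_left a)
    (Iform_add_right a) (Iform_smul_right a)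

@[simp] lemma I2_apply (x y : Lt a) : I2 a x y = Iform a x y := rfl

lemma Iform_gen_gen (v w : Vt a) : Iform a (gen a v) (gen a w) = cartan a v w := by
  unfold Iform gen
  rw [Finsupp.sum_single_index, Finsupp.sum_single_index]
  · ring
  · ring_nf
  · simp

lemma Iform_zero_left (y : Lt a) : Iform a 0 y = 0 := by
  rw [← I2_apply, map_zero]; rfl

lemma Iform_zero_right (x : Lt a) : Iform a x 0 = 0 := by
  rw [← I2_apply, map_zero]

lemma Iform_sub_right (x y y' : Lt a) :
    Iform a x (y - y') = Iform a x y - Iform a x y' := by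
  rw [← I2_apply, map_sub]; rfl

lemma Iform_sub_left (x x' y : Lt a) :
    Iform a (x - x') y = Iform a x y - Iform a x' y := by
  rw [← I2_apply, map_sub]; rfl

lemma Iform_neg_right (x y : Lt a) : Iform a x (-y) = - Iform a x y := by
  rw [← I2_apply, map_neg]; rfl

lemma Iform_sum_right {s : Finset ℕ} (x : Lt a) (f : ℕ → Lt a) :
    Iform a x (∑ t ∈ s, f t) = ∑ t ∈ s, Iform a x (f t) := by
  rw [← I2_apply, map_sum]; rfl

end Basics
section Arms

variable (a : Fin 3 → ℕ)

/-- Totalised branch basis vector: `B a i t = α_{(i,t+1)}` if `t < aᵢ - 1`, else `0`. -/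
def B (i : Fin 3) (t : ℕ) : Lt a :=
  if h : t < a i - 1 then gen a (Vt.br i ⟨t, h⟩) else 0

lemma B_of_lt (i : Fin 3) {t : ℕ} (h : t < a i - 1) :
    B a i t = gen a (Vt.br i ⟨t, h⟩) := dif_pos h

lemma B_of_ge (i : Fin 3) {t : ℕ} (h : ¬ t < a i - 1) : B a i t = 0 := dif_neg h

/-- The sum of the branch basis vectors of arm `i`. -/
def S (i : Fin 3) : Lt a := ∑ t ∈ Finset.range (a i - 1), B a i t

/-- One period of the `c̃`-orbit cycle attached to arm `i`. -/
def E (i : Fin 3) (u : ℕ) : Lt a :=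
  if u < a i - 1 then B a i u else delta a - S a i

/-- Values of `Iform` between branch vectors. -/
lemma Iform_B_B (i i' : Fin 3) (t t' : ℕ) :
    Iform a (B a i t) (B a i' t') =
      if h : t < a i - 1 then
        if h' : t' < a i' - 1 then
          (if i = i' ∧ (t = t' + 1 ∨ t' = t + 1) then -1
            else if i = i' ∧ t = t' then 2 else 0)
        else 0
      else 0 := by
  by_cases h : t < a i - 1
  · by_cases h' : t' < a i' - 1
    · rw [dif_pos h, dif_pos h', B_of_lt a i h, B_of_lt a i' h', Iform_gen_gen]
      simp only [cartan]
    · rw [dif_pos h, dif_neg h', B_of_ge a i' h', Iform_zero_right]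
  · rw [dif_neg h, B_of_ge a i h, Iform_zero_left]

lemma Iform_B_B_ne {i i' : Fin 3} (hne : i ≠ i') (t t' : ℕ) :
    Iform a (B a i t) (B a i' t') = 0 := by
  rw [Iform_B_B]; split_ifs with h h' h1 h2 <;> simp_all

lemma Iform_gen_B (v : Vt a) (i : Fin 3) {t : ℕ} (h : t < a i - 1) :
    Iform a (gen a v) (B a i t) = cartan a v (Vt.br i ⟨t, h⟩) := by
  rw [B_of_lt a i h, Iform_gen_gen]

lemma Iform_B_gen (v : Vt a) (i : Fin 3) {t : ℕ} (h : t < a i - 1) :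
    Iform a (B a i t) (gen a v) = cartan a (Vt.br i ⟨t, h⟩) v := by
  rw [B_of_lt a i h, Iform_gen_gen]

/- reflect lemmas -/

lemma reflect_fix {α x : Lt a} (h : Iform a α x = 0) : reflect a α x = x := by
  rw [reflect, h, zero_smul, sub_zero]

lemma reflect_add (α x y : Lt a) :
    reflect a α (x + y) = reflect a α x + reflect a α y := by
  simp only [reflect, Iform_add_right, add_smul]; abel

lemma reflect_smul (α : Lt a) (z : ℤ) (x : Lt a) :
    reflect a α (z • x) = z • reflect a α x := by
  simp only [reflect, Iform_smul_right, mul_smul, smul_sub]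

lemma reflect_sub (α x y : Lt a) :
    reflect a α (x - y) = reflect a α x - reflect a α y := by
  simp only [reflect, Iform_sub_right, sub_smul]; abel

lemma reflect_neg (α x : Lt a) : reflect a α (-x) = - reflect a α x := by
  simp only [reflect, Iform_neg_right, neg_smul]; abel

/- fold machinery -/

lemma foldr_comp_apply {β : Type*} (l : List β) (r : β → Lt a → Lt a) (x : Lt a) :
    (l.foldr (fun j f => r j ∘ f) id) x = l.foldr r x := by
  induction l with
  | nil => rfl
  | cons b l ih => simp [List.foldr_cons, ih]

/-- The partial arm fold: apply `r_{B (n-1)}, …, r_{B 0}` in this order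
(i.e. `B (n-1)` first). -/
def Af (i : Fin 3) (n : ℕ) (x : Lt a) : Lt a :=
  (List.range n).foldr (fun t y => reflect a (B a i t) y) x

@[simp] lemma Af_zero (i : Fin 3) (x : Lt a) : Af a i 0 x = x := rfl

lemma Af_succ (i : Fin 3) (n : ℕ) (x : Lt a) :
    Af a i (n + 1) x = Af a i n (reflect a (B a i n) x) := by
  unfold Af
  rw [List.range_succ, List.foldr_append]
  rfl

lemma branchComp_eq (i : Fin 3) (x : Lt a) : branchComp a i x = Af a i (a i - 1) x := by
  unfold branchComp Af
  rw [foldr_comp_apply]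
  rw [← (List.ext_getElem (by simp) (by simp) :
    (List.finRange (a i - 1)).map Fin.val = List.range (a i - 1)), List.foldr_map]
  congr 1
  ext j y
  rw [B_of_lt a i j.isLt]

lemma Af_add (i : Fin 3) (n : ℕ) (x y : Lt a) :
    Af a i n (x + y) = Af a i n x + Af a i n y := by
  induction n generalizing x y with
  | zero => rfl
  | succ n ih => rw [Af_succ, Af_succ, Af_succ, reflect_add, ih]

lemma Af_smul (i : Fin 3) (n : ℕ) (z : ℤ) (x : Lt a) :
    Af a i n (z • x) = z • Af a i n x := by
  induction n generalizing x with
  | zero => rfl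
  | succ n ih => rw [Af_succ, Af_succ, reflect_smul, ih]

lemma Af_fix (i : Fin 3) (n : ℕ) {x : Lt a}
    (h : ∀ t, t < n → Iform a (B a i t) x = 0) : Af a i n x = x := by
  induction n with
  | zero => rfl
  | succ n ih =>
      rw [Af_succ, reflect_fix a (h n (Nat.lt_succ_self n))]
      exact ih (fun t ht => h t (ht.trans (Nat.lt_succ_self n)))

lemma Af_head (i : Fin 3) (n : ℕ) {x : Lt a}
    (h : ∀ t, 0 < t → t < n → Iform a (B a i t) x = 0) (hn : 0 < n) :
    Af a i n x = reflect a (B a i 0) x := by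
  induction n with
  | zero => omega
  | succ n ih =>
      rcases Nat.eq_zero_or_pos n with h0 | h0
      · subst h0; rw [Af_succ]; rfl
      · rw [Af_succ, reflect_fix a (h n h0 (Nat.lt_succ_self n))]
        exact ih (fun t ht htn => h t ht (htn.trans (Nat.lt_succ_self n))) h0

end Arms
section ArmEval

variable (a : Fin 3 → ℕ)

lemma IBB (i : Fin 3) {t t' : ℕ} (ht : t < a i - 1) (ht' : t' < a i - 1) :
    Iform a (B a i t) (B a i t') =
      (if t = t' + 1 ∨ t' = t + 1 then -1 else if t = t' then 2 else 0) := by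
  rw [Iform_B_B, dif_pos ht, dif_pos ht']
  simp

lemma Af_so (i : Fin 3) (x : Lt a)
    (h1 : ∀ t, 0 < t → t < a i - 1 → Iform a (B a i t) x = 0)
    (h0 : 0 < a i - 1 → Iform a (B a i 0) x = -1) :
    Af a i (a i - 1) x = x + B a i 0 := by
  rcases Nat.eq_zero_or_pos (a i - 1) with hm | hm
  · rw [hm, Af_zero, B_of_ge a i (by omega), add_zero]
  · rw [Af_head a i _ h1 hm, reflect, h0 hm]
    module

lemma Af_br (i : Fin 3) {t : ℕ} (h : t + 1 < a i - 1) :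
    Af a i (a i - 1) (B a i t) = B a i (t + 1) := by
  have base : Af a i (t + 2) (B a i t) = B a i (t + 1) := by
    rw [Af_succ]
    have e1 : reflect a (B a i (t + 1)) (B a i t) = B a i t + B a i (t + 1) := by
      rw [reflect, IBB a i h (by omega), if_pos (by omega)]
      module
    rw [e1, Af_succ, reflect_add,
        reflect, reflect, IBB a i (by omega) (by omega), IBB a i (by omega) h]
    rw [if_neg (by omega), if_pos rfl, if_pos (by omega)]
    have e2 : Af a i t (B a i (t+1)) = B a i (t+1) := by
      refine Af_fix a i t (fun t' ht' => ?_)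
      rw [IBB a i (by omega) h, if_neg (by omega), if_neg (by omega)]
    have : (B a i t - (2:ℤ) • B a i t) + (B a i (t+1) - (-1:ℤ) • B a i t)
        = B a i (t+1) := by module
    rw [Af_add] at *
    rw [← Af_add, this, e2]
  have key : ∀ n, t + 2 ≤ n → n ≤ a i - 1 → Af a i n (B a i t) = B a i (t + 1) := by
    intro n
    induction n with
    | zero => omega
    | succ n ih =>
        intro hn1 hn2
        rcases Nat.lt_or_ge (t + 2) (n + 1) with hlt | hge
        · rw [Af_succ, reflect_fix a (by
            rw [IBB a i (by omega) (by omega), if_neg (by omega), if_neg (by omega)])]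
          exact ih (by omega) (by omega)
        · have : n + 1 = t + 2 := by omega
          rw [this]; exact base
  exact key (a i - 1) (by omega) le_rfl

lemma Af_partial (i : Fin 3) :
    ∀ j, j < a i - 1 → Af a i j (-(∑ t ∈ Finset.Ico j (a i - 1), B a i t)) = -(S a i) := by
  intro j
  induction j with
  | zero =>
      intro _
      rw [Af_zero, S, Finset.range_eq_Ico]
  | succ j ih =>
      intro hj
      rw [Af_succ]
      have hI : Iform a (B a i j) (-(∑ t ∈ Finset.Ico (j+1) (a i - 1), B a i t)) = 1 := by
        rw [Iform_neg_right, Iform_sum_right]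
        rw [Finset.sum_eq_single_of_mem (j+1) (Finset.mem_Ico.2 ⟨le_rfl, hj⟩)]
        · rw [IBB a i (by omega) hj, if_pos (by omega)]; ring
        · intro t htmem htne
          have ht := Finset.mem_Ico.1 htmem
          rw [IBB a i (by omega) (by omega), if_neg (by omega), if_neg (by omega)]
      rw [reflect, hI]
      have hsum : (-(∑ t ∈ Finset.Ico (j+1) (a i - 1), B a i t)) - (1:ℤ) • B a i j
          = -(∑ t ∈ Finset.Ico j (a i - 1), B a i t) := by
        rw [Finset.sum_eq_sum_Ico_succ_bot (by omega : j < a i - 1)]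
        module
      rw [hsum]
      exact ih (by omega)

lemma Af_last (i : Fin 3) (hm : 0 < a i - 1) :
    Af a i (a i - 1) (B a i (a i - 1 - 1)) = -(S a i) := by
  obtain ⟨m', hm'⟩ : ∃ m', a i - 1 = m' + 1 := ⟨a i - 1 - 1, by omega⟩
  rw [hm']
  have h1 : (m' + 1) - 1 = m' := rfl
  rw [h1, Af_succ]
  have e1 : reflect a (B a i m') (B a i m') = -(B a i m') := by
    rw [reflect, IBB a i (by omega) (by omega), if_neg (by omega), if_pos rfl]
    module
  rw [e1]
  have e2 : -(B a i m') = -(∑ t ∈ Finset.Ico m' (a i - 1), B a i t) := by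
    rw [hm', Finset.sum_Ico_eq_sum_range]
    simp
  rw [e2]
  exact Af_partial a i m' (by omega)
end ArmEval
section CoxEval

variable (a : Fin 3 → ℕ)

lemma Iform_B_star (i : Fin 3) (t : ℕ) :
    Iform a (B a i t) (gen a Vt.star) = if t = 0 ∧ 0 < a i - 1 then -1 else 0 := by
  by_cases h : t < a i - 1
  · rw [Iform_B_gen a Vt.star i h]
    simp only [cartan]
    split_ifs <;> simp_all <;> omega
  · rw [B_of_ge a i h, Iform_zero_left, if_neg (by omega)]

lemma Iform_B_one (i : Fin 3) (t : ℕ) :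
    Iform a (B a i t) (gen a Vt.one) = if t = 0 ∧ 0 < a i - 1 then -1 else 0 := by
  by_cases h : t < a i - 1
  · rw [Iform_B_gen a Vt.one i h]
    simp only [cartan]
    split_ifs <;> simp_all <;> omega
  · rw [B_of_ge a i h, Iform_zero_left, if_neg (by omega)]

lemma Iform_star_B (i : Fin 3) (t : ℕ) :
    Iform a (gen a Vt.star) (B a i t) = if t = 0 ∧ 0 < a i - 1 then -1 else 0 := by
  by_cases h : t < a i - 1
  · rw [Iform_gen_B a Vt.star i h]
    simp only [cartan]
    split_ifs <;> simp_all <;> omega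
  · rw [B_of_ge a i h, Iform_zero_right, if_neg (by omega)]

lemma Iform_one_B (i : Fin 3) (t : ℕ) :
    Iform a (gen a Vt.one) (B a i t) = if t = 0 ∧ 0 < a i - 1 then -1 else 0 := by
  by_cases h : t < a i - 1
  · rw [Iform_gen_B a Vt.one i h]
    simp only [cartan]
    split_ifs <;> simp_all <;> omega
  · rw [B_of_ge a i h, Iform_zero_right, if_neg (by omega)]

lemma Iform_B_delta (i : Fin 3) (t : ℕ) : Iform a (B a i t) (delta a) = 0 := by
  rw [delta, Iform_sub_right, Iform_B_star, Iform_B_one, sub_self]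

lemma Iform_gen_delta (v : Vt a) : Iform a (gen a v) (delta a) = 0 := by
  rw [delta, Iform_sub_right, Iform_gen_gen, Iform_gen_gen]
  cases v <;> simp [cartan]

lemma Iform_star_S (i : Fin 3) :
    Iform a (gen a Vt.star) (S a i) = if 0 < a i - 1 then -1 else 0 := by
  rw [S, Iform_sum_right]
  rcases Nat.eq_zero_or_pos (a i - 1) with hm | hm
  · rw [hm, if_neg (by omega)]; simp
  · rw [if_pos hm]
    rw [Finset.sum_eq_single_of_mem 0 (Finset.mem_range.2 hm)]
    · rw [Iform_star_B, if_pos ⟨rfl, hm⟩]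
    · intro t _ htne
      rw [Iform_star_B, if_neg (by omega)]

lemma Iform_one_S (i : Fin 3) :
    Iform a (gen a Vt.one) (S a i) = if 0 < a i - 1 then -1 else 0 := by
  rw [S, Iform_sum_right]
  rcases Nat.eq_zero_or_pos (a i - 1) with hm | hm
  · rw [hm, if_neg (by omega)]; simp
  · rw [if_pos hm]
    rw [Finset.sum_eq_single_of_mem 0 (Finset.mem_range.2 hm)]
    · rw [Iform_one_B, if_pos ⟨rfl, hm⟩]
    · intro t _ htne
      rw [Iform_one_B, if_neg (by omega)]

lemma Iform_B_S_ne {i i' : Fin 3} (h : i ≠ i') (t : ℕ) :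
    Iform a (B a i t) (S a i') = 0 := by
  rw [S, Iform_sum_right]
  exact Finset.sum_eq_zero (fun t' _ => Iform_B_B_ne a h t t')

lemma Af_fix_B {i i' : Fin 3} (h : i ≠ i') (n t' : ℕ) :
    Af a i n (B a i' t') = B a i' t' :=
  Af_fix a i n (fun t _ => Iform_B_B_ne a h t t')

lemma Af_fix_negS {i i' : Fin 3} (h : i ≠ i') (n : ℕ) :
    Af a i n (-(S a i')) = -(S a i') :=
  Af_fix a i n (fun t _ => by rw [Iform_neg_right, Iform_B_S_ne a h, neg_zero])

lemma Af_fix_delta (i : Fin 3) (n : ℕ) : Af a i n (delta a) = delta a :=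
  Af_fix a i n (fun t _ => Iform_B_delta a i t)

lemma Af_star (i : Fin 3) : Af a i (a i - 1) (gen a Vt.star) = gen a Vt.star + B a i 0 :=
  Af_so a i _ (fun t ht _ => by rw [Iform_B_star, if_neg (by omega)])
    (fun hm => by rw [Iform_B_star, if_pos ⟨rfl, hm⟩])

lemma cox_apply (x : Lt a) :
    coxeter a x = reflect a (gen a Vt.star) (reflect a (gen a Vt.one)
      (Af a 0 (a 0 - 1) (Af a 1 (a 1 - 1) (Af a 2 (a 2 - 1) x)))) := by
  simp only [coxeter, Function.comp_apply, branchComp_eq]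

lemma cox_add (x y : Lt a) : coxeter a (x + y) = coxeter a x + coxeter a y := by
  simp only [cox_apply, Af_add, reflect_add]

lemma cox_smul (z : ℤ) (x : Lt a) : coxeter a (z • x) = z • coxeter a x := by
  simp only [cox_apply, Af_smul, reflect_smul]

lemma cox_neg (x : Lt a) : coxeter a (-x) = - coxeter a x := by
  have h : -x = (-1 : ℤ) • x := by module
  rw [h, cox_smul]; module

lemma cox_sub (x y : Lt a) : coxeter a (x - y) = coxeter a x - coxeter a y := by
  rw [sub_eq_add_neg, cox_add, cox_neg]; module

lemma cox_delta : coxeter a (delta a) = delta a := by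
  rw [cox_apply, Af_fix_delta, Af_fix_delta, Af_fix_delta,
    reflect_fix a (Iform_gen_delta a Vt.one), reflect_fix a (Iform_gen_delta a Vt.star)]

lemma S_zero (i : Fin 3) (h : ¬ 0 < a i - 1) : S a i = 0 := by
  rw [S]
  have h0 : a i - 1 = 0 := by omega
  rw [h0, Finset.range_zero, Finset.sum_empty]

lemma arms_comp (i : Fin 3) (x y : Lt a)
    (hself : Af a i (a i - 1) x = y)
    (hx : ∀ i', i' ≠ i → Af a i' (a i' - 1) x = x)
    (hy : ∀ i', i' ≠ i → Af a i' (a i' - 1) y = y) :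
    Af a 0 (a 0 - 1) (Af a 1 (a 1 - 1) (Af a 2 (a 2 - 1) x)) = y := by
  rcases i with ⟨iv, hi⟩
  interval_cases iv
  · rw [show (⟨0, hi⟩ : Fin 3) = 0 from rfl] at hself hx hy
    rw [hx 2 (by decide), hx 1 (by decide), hself]
  · rw [show (⟨1, hi⟩ : Fin 3) = 1 from rfl] at hself hx hy
    rw [hx 2 (by decide), hself, hy 0 (by decide)]
  · rw [show (⟨2, hi⟩ : Fin 3) = 2 from rfl] at hself hx hy
    rw [hself, hy 1 (by decide), hy 0 (by decide)]

lemma cox_B (i : Fin 3) {t : ℕ} (h : t + 1 < a i - 1) :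
    coxeter a (B a i t) = B a i (t + 1) := by
  have f1 : reflect a (gen a Vt.one) (B a i (t+1)) = B a i (t+1) :=
    reflect_fix a (by rw [Iform_one_B, if_neg (by omega)])
  have f2 : reflect a (gen a Vt.star) (B a i (t+1)) = B a i (t+1) :=
    reflect_fix a (by rw [Iform_star_B, if_neg (by omega)])
  rw [cox_apply, arms_comp a i (B a i t) (B a i (t+1)) (Af_br a i h)
    (fun i' hne => Af_fix_B a hne _ _) (fun i' hne => Af_fix_B a hne _ _), f1, f2]

lemma cox_B_last (i : Fin 3) (hm : 0 < a i - 1) :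
    coxeter a (B a i (a i - 1 - 1)) = delta a - S a i := by
  have e1 : reflect a (gen a Vt.one) (-(S a i)) = -(S a i) - gen a Vt.one := by
    rw [reflect, Iform_neg_right, Iform_one_S, if_pos hm]
    module
  have e2 : reflect a (gen a Vt.star) (-(S a i) - gen a Vt.one) = delta a - S a i := by
    have hI : Iform a (gen a Vt.star) (-(S a i) - gen a Vt.one) = -1 := by
      rw [Iform_sub_right, Iform_neg_right, Iform_star_S, if_pos hm, Iform_gen_gen]
      show -(-1) - cartan a Vt.star Vt.one = -1
      norm_num [cartan]
    rw [reflect, hI, delta]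
    module
  rw [cox_apply, arms_comp a i _ (-(S a i)) (Af_last a i hm)
    (fun i' hne => Af_fix_B a hne _ _) (fun i' hne => Af_fix_negS a hne _), e1, e2]

lemma refl_so (y : Lt a) (p q : ℤ) (hp : Iform a (gen a Vt.one) y = p)
    (hq : Iform a (gen a Vt.star) y = q) :
    reflect a (gen a Vt.star) (reflect a (gen a Vt.one) y)
      = y - p • gen a Vt.one - (q - 2*p) • gen a Vt.star := by
  have hc : cartan a Vt.star Vt.one = 2 := rfl
  simp only [reflect, Iform_sub_right, Iform_smul_right, Iform_gen_gen]
  rw [hp, hq, hc]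
  module

lemma cox_star :
    coxeter a (gen a Vt.star) = gen a Vt.one + E a 0 0 + E a 1 0 + E a 2 0 := by
  obtain ⟨w0, hw0⟩ : ∃ w, Iform a (gen a Vt.one) (B a 0 0) = w := ⟨_, rfl⟩
  obtain ⟨w1, hw1⟩ : ∃ w, Iform a (gen a Vt.one) (B a 1 0) = w := ⟨_, rfl⟩
  obtain ⟨w2, hw2⟩ : ∃ w, Iform a (gen a Vt.one) (B a 2 0) = w := ⟨_, rfl⟩
  have hsb : ∀ i, Iform a (gen a Vt.star) (B a i 0) = Iform a (gen a Vt.one) (B a i 0) := by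
    intro i; rw [Iform_star_B, Iform_one_B]
  have hE : ∀ (i : Fin 3) (w : ℤ), Iform a (gen a Vt.one) (B a i 0) = w →
      E a i 0 = B a i 0 + (1 + w) • delta a := by
    intro i w hw
    rw [Iform_one_B] at hw
    by_cases hm : 0 < a i - 1
    · rw [if_pos (by exact ⟨rfl, hm⟩)] at hw
      rw [E, if_pos hm, ← hw]
      module
    · rw [if_neg (by omega)] at hw
      rw [E, if_neg (by omega), ← hw, B_of_ge a i (by omega), S_zero a i hm]
      module
  have step1 : Af a 0 (a 0 - 1) (Af a 1 (a 1 - 1) (Af a 2 (a 2 - 1) (gen a Vt.star)))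
      = gen a Vt.star + B a 0 0 + B a 1 0 + B a 2 0 := by
    rw [Af_star a 2, Af_add, Af_star a 1, Af_fix_B a (by decide : (1:Fin 3) ≠ 2),
      Af_add, Af_add, Af_star a 0, Af_fix_B a (by decide : (0:Fin 3) ≠ 1),
      Af_fix_B a (by decide : (0:Fin 3) ≠ 2)]
  have hc1 : cartan a Vt.one Vt.star = 2 := rfl
  have hc2 : cartan a Vt.star Vt.star = 2 := rfl
  have hI1 : Iform a (gen a Vt.one) (gen a Vt.star + B a 0 0 + B a 1 0 + B a 2 0)
      = 2 + w0 + w1 + w2 := by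
    rw [Iform_add_right, Iform_add_right, Iform_add_right, Iform_gen_gen, hc1, hw0, hw1, hw2]
  have hI2 : Iform a (gen a Vt.star) (gen a Vt.star + B a 0 0 + B a 1 0 + B a 2 0)
      = 2 + w0 + w1 + w2 := by
    rw [Iform_add_right, Iform_add_right, Iform_add_right, Iform_gen_gen, hc2,
      hsb 0, hsb 1, hsb 2, hw0, hw1, hw2]
  rw [cox_apply, step1, refl_so a _ _ _ hI1 hI2, hE 0 w0 hw0, hE 1 w1 hw1, hE 2 w2 hw2, delta]
  module

end CoxEval
section Cycle

variable (a : Fin 3 → ℕ)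

lemma cox_zero : coxeter a (0 : Lt a) = 0 := by
  have h : (0 : Lt a) = (0 : ℤ) • (0 : Lt a) := by module
  rw [h, cox_smul]; module

/-- `coxeter` as a linear map. -/
def coxL : Lt a →ₗ[ℤ] Lt a where
  toFun := coxeter a
  map_add' := cox_add a
  map_smul' := cox_smul a

@[simp] lemma coxL_apply (x : Lt a) : coxL a x = coxeter a x := rfl

lemma cox_sum {s : Finset ℕ} (f : ℕ → Lt a) :
    coxeter a (∑ t ∈ s, f t) = ∑ t ∈ s, coxeter a (f t) := by
  rw [← coxL_apply, map_sum]; rfl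

lemma go_eq : gen a Vt.one = gen a Vt.star - delta a := by
  rw [delta]; module

lemma cox_one : coxeter a (gen a Vt.one) = coxeter a (gen a Vt.star) - delta a := by
  rw [go_eq, cox_sub, cox_delta]

lemma cox_S (hm : 0 < a i - 1) : coxeter a (S a i) = delta a - B a i 0 := by
  obtain ⟨m', hm'⟩ : ∃ m', a i - 1 = m' + 1 := ⟨a i - 1 - 1, by omega⟩
  rw [S, hm', Finset.sum_range_succ, cox_add, cox_sum]
  have h1 : ∀ t ∈ Finset.range m', coxeter a (B a i t) = B a i (t+1) :=
    fun t ht => cox_B a i (by have := Finset.mem_range.1 ht; omega)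
  rw [Finset.sum_congr rfl h1]
  have h2 : coxeter a (B a i m') = delta a - S a i := by
    have : m' = a i - 1 - 1 := by omega
    rw [this]; exact cox_B_last a i hm
  rw [h2, S, hm', Finset.sum_range_succ']
  module

lemma cox_E (i : Fin 3) (hai : 0 < a i) (u : ℕ) (hu : u < a i) :
    coxeter a (E a i u) = E a i ((u + 1) % a i) := by
  by_cases h1 : u + 1 < a i - 1
  · rw [E, if_pos (by omega), cox_B a i h1, Nat.mod_eq_of_lt (by omega), E, if_pos h1]
  · by_cases h2 : u < a i - 1
    · have hu1 : u = a i - 1 - 1 := by omega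
      have hm : 0 < a i - 1 := by omega
      have he : u + 1 = a i - 1 := by omega
      rw [E, if_pos h2, hu1, cox_B_last a i hm, Nat.mod_eq_of_lt (by omega), E, if_neg (by omega)]
    · have hu' : u + 1 = a i := by omega
      have hmod : (u + 1) % a i = 0 := by rw [hu', Nat.mod_self]
      rw [E, if_neg h2, hmod, cox_sub, cox_delta]
      rcases Nat.eq_zero_or_pos (a i - 1) with hm | hm
      · rw [S_zero a i (by omega), cox_zero, E, if_neg (by omega), S_zero a i (by omega)]
      · rw [cox_S a hm, E, if_pos hm]
        module

/-- The cyclic orbit function of arm `i`. -/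
def Ec (i : Fin 3) (u : ℕ) : Lt a := E a i (u % a i)

lemma cox_Ec (i : Fin 3) (hai : 0 < a i) (u : ℕ) :
    coxeter a (Ec a i u) = Ec a i (u + 1) := by
  rw [Ec, cox_E a i hai _ (Nat.mod_lt _ hai), Ec, Nat.mod_add_mod]

lemma cox_iter_Ec (i : Fin 3) (hai : 0 < a i) (u : ℕ) :
    ∀ n, (coxeter a)^[n] (Ec a i u) = Ec a i (u + n) := by
  intro n
  induction n with
  | zero => rfl
  | succ n ih =>
      rw [Function.iterate_succ_apply', ih, cox_Ec a i hai, Nat.add_assoc]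

lemma cox_iter_delta : ∀ n, (coxeter a)^[n] (delta a) = delta a := by
  intro n
  induction n with
  | zero => rfl
  | succ n ih => rw [Function.iterate_succ_apply', ih, cox_delta]

lemma cox_iter_add (n : ℕ) (x y : Lt a) :
    (coxeter a)^[n] (x + y) = (coxeter a)^[n] x + (coxeter a)^[n] y := by
  induction n generalizing x y with
  | zero => rfl
  | succ n ih => rw [Function.iterate_succ_apply', ih, cox_add,
      Function.iterate_succ_apply', Function.iterate_succ_apply']

lemma cox_iter_smul (n : ℕ) (z : ℤ) (x : Lt a) :
    (coxeter a)^[n] (z • x) = z • (coxeter a)^[n] x := by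
  induction n generalizing x with
  | zero => rfl
  | succ n ih => rw [Function.iterate_succ_apply', ih, cox_smul,
      Function.iterate_succ_apply']

lemma cox_iter_sub (n : ℕ) (x y : Lt a) :
    (coxeter a)^[n] (x - y) = (coxeter a)^[n] x - (coxeter a)^[n] y := by
  have h : x - y = x + (-1 : ℤ) • y := by module
  rw [h, cox_iter_add, cox_iter_smul]; module

lemma cox_iter_zero (n : ℕ) : (coxeter a)^[n] (0 : Lt a) = 0 := by
  have h : (0 : Lt a) = (0:ℤ) • (0 : Lt a) := by module
  rw [h, cox_iter_smul]; module

lemma cox_iter_star (hai : ∀ i, 0 < a i) :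
    ∀ n, 1 ≤ n → (coxeter a)^[n] (gen a Vt.star)
      = gen a Vt.star - (n : ℤ) • delta a
        + (∑ t ∈ Finset.range n, Ec a 0 t + (∑ t ∈ Finset.range n, Ec a 1 t
          + ∑ t ∈ Finset.range n, Ec a 2 t)) := by
  intro n
  induction n with
  | zero => omega
  | succ n ih =>
      intro _
      rcases Nat.eq_zero_or_pos n with h0 | h0
      · subst h0
        rw [Function.iterate_one, cox_star]
        have hEc : ∀ i : Fin 3, Ec a i 0 = E a i 0 := by
          intro i; rw [Ec, Nat.zero_mod]
        rw [Finset.sum_range_one, Finset.sum_range_one, Finset.sum_range_one]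
        simp only [hEc, go_eq]
        push_cast
        module
      · rw [Function.iterate_succ_apply', ih h0, cox_add, cox_sub, cox_smul, cox_delta,
          cox_star, cox_add, cox_add, cox_sum, cox_sum, cox_sum]
        have hc : ∀ i : Fin 3, ∀ t ∈ Finset.range n,
            coxeter a (Ec a i t) = Ec a i (t+1) :=
          fun i t _ => cox_Ec a i (hai i) t
        rw [Finset.sum_congr rfl (hc 0), Finset.sum_congr rfl (hc 1),
          Finset.sum_congr rfl (hc 2)]
        have hs : ∀ i : Fin 3, ∑ t ∈ Finset.range (n+1), Ec a i t
            = ∑ t ∈ Finset.range n, Ec a i (t+1) + Ec a i 0 :=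
          fun i => Finset.sum_range_succ' _ n
        rw [hs 0, hs 1, hs 2]
        have hEc : ∀ i : Fin 3, Ec a i 0 = E a i 0 := by
          intro i; rw [Ec, Nat.zero_mod]
        simp only [hEc, go_eq]
        push_cast
        module

lemma sum_Ec_period (i : Fin 3) (hai : 0 < a i) :
    ∑ t ∈ Finset.range (a i), Ec a i t = delta a := by
  have h1 : ∀ t ∈ Finset.range (a i), Ec a i t = E a i t :=
    fun t ht => by rw [Ec, Nat.mod_eq_of_lt (Finset.mem_range.1 ht)]
  rw [Finset.sum_congr rfl h1]
  obtain ⟨m', hm'⟩ : ∃ m', a i = m' + 1 := ⟨a i - 1, by omega⟩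
  have hm'' : a i - 1 = m' := by omega
  rw [hm', Finset.sum_range_succ]
  have h2 : ∀ t ∈ Finset.range m', E a i t = B a i t :=
    fun t ht => by rw [E, if_pos (by have := Finset.mem_range.1 ht; omega)]
  rw [Finset.sum_congr rfl h2, E, if_neg (by omega), S, hm'']
  module

lemma sum_Ec_mul (i : Fin 3) (hai : 0 < a i) :
    ∀ q, ∑ t ∈ Finset.range (q * a i), Ec a i t = (q : ℤ) • delta a := by
  intro q
  induction q with
  | zero => simp
  | succ q ih =>
      rw [Nat.succ_mul, Finset.sum_range_add, ih]
      have h1 : ∀ t ∈ Finset.range (a i), Ec a i (q * a i + t) = Ec a i t := by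
        intro t _
        rw [Ec, Ec, Nat.mul_comm, Nat.add_comm, Nat.add_mul_mod_self_left]
      rw [Finset.sum_congr rfl h1, sum_Ec_period a i hai]
      push_cast
      module

end Cycle
section Ell

variable (a : Fin 3 → ℕ)

lemma cox_iter_star_ell (hai : ∀ i, 0 < a i) (ℓ : ℕ) (hdvd : ∀ i, a i ∣ ℓ)
    (hpos : 0 < ℓ) (k : ℤ) (hk : k = ((ℓ / a 0 + ℓ / a 1 + ℓ / a 2 : ℕ) : ℤ) - (ℓ : ℤ)) :
    (coxeter a)^[ℓ] (gen a Vt.star) = gen a Vt.star + k • delta a := by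
  obtain ⟨q0, hq0⟩ := hdvd 0
  obtain ⟨q1, hq1⟩ := hdvd 1
  obtain ⟨q2, hq2⟩ := hdvd 2
  have hsum : ∀ i : Fin 3, ∀ q : ℕ, ℓ = a i * q →
      ∑ t ∈ Finset.range ℓ, Ec a i t = (q : ℤ) • delta a := by
    intro i q hq
    rw [hq, Nat.mul_comm]
    exact sum_Ec_mul a i (hai i) q
  have hdiv : ∀ i : Fin 3, ∀ q : ℕ, ℓ = a i * q → ℓ / a i = q := by
    intro i q hq
    rw [hq, Nat.mul_div_cancel_left q (hai i)]
  rw [cox_iter_star a hai ℓ hpos, hsum 0 q0 hq0, hsum 1 q1 hq1, hsum 2 q2 hq2,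
    hk, hdiv 0 q0 hq0, hdiv 1 q1 hq1, hdiv 2 q2 hq2]
  push_cast
  module

lemma cox_iter_one_ell (hai : ∀ i, 0 < a i) (ℓ : ℕ) (hdvd : ∀ i, a i ∣ ℓ)
    (hpos : 0 < ℓ) (k : ℤ) (hk : k = ((ℓ / a 0 + ℓ / a 1 + ℓ / a 2 : ℕ) : ℤ) - (ℓ : ℤ)) :
    (coxeter a)^[ℓ] (gen a Vt.one) = gen a Vt.one + k • delta a := by
  rw [go_eq, cox_iter_sub, cox_iter_delta, cox_iter_star_ell a hai ℓ hdvd hpos k hk]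
  module

lemma cox_iter_br_ell (hai : ∀ i, 0 < a i) (ℓ : ℕ) (hdvd : ∀ i, a i ∣ ℓ)
    (i : Fin 3) {t : ℕ} (ht : t < a i - 1) :
    (coxeter a)^[ℓ] (B a i t) = B a i t := by
  obtain ⟨q, hq⟩ := hdvd i
  have hB : B a i t = Ec a i t := by
    unfold Ec
    rw [Nat.mod_eq_of_lt (by omega : t < a i)]
    unfold E
    rw [if_pos ht]
  rw [hB, cox_iter_Ec a i (hai i) t ℓ, Ec, hq,
    Nat.add_mul_mod_self_left, Nat.mod_eq_of_lt (by omega), E, if_pos ht, ← hB]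

lemma cox_iter_formula (hai : ∀ i, 0 < a i) (ℓ : ℕ) (hdvd : ∀ i, a i ∣ ℓ)
    (hpos : 0 < ℓ) (k : ℤ) (hk : k = ((ℓ / a 0 + ℓ / a 1 + ℓ / a 2 : ℕ) : ℤ) - (ℓ : ℤ))
    (x : Lt a) :
    (coxeter a)^[ℓ] x = x + ((x Vt.star + x Vt.one) * k) • delta a := by
  induction x using Finsupp.induction_linear with
  | zero => rw [cox_iter_zero]; simp
  | add x y ihx ihy =>
      rw [cox_iter_add, ihx, ihy, Finsupp.add_apply, Finsupp.add_apply]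
      module
  | single v z =>
      have hs : Finsupp.single v z = z • gen a v := by
        rw [gen, Finsupp.smul_single', mul_one]
      rw [hs, cox_iter_smul]
      cases v with
      | star =>
          rw [cox_iter_star_ell a hai ℓ hdvd hpos k hk]
          have h1 : (z • gen a Vt.star) Vt.star = z := by
            simp [gen, Finsupp.single_apply]
          have h2 : (z • gen a Vt.star) Vt.one = 0 := by
            simp [gen, Finsupp.single_apply]
          rw [h1, h2]
          module
      | one =>
          rw [cox_iter_one_ell a hai ℓ hdvd hpos k hk]
          have h1 : (z • gen a Vt.one) Vt.star = 0 := by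
            simp [gen, Finsupp.single_apply]
          have h2 : (z • gen a Vt.one) Vt.one = z := by
            simp [gen, Finsupp.single_apply]
          rw [h1, h2]
          module
      | br i j =>
          have hg : gen a (Vt.br i j) = B a i (j : ℕ) := by
            rw [B_of_lt a i j.isLt]
          rw [hg, cox_iter_br_ell a hai ℓ hdvd i j.isLt]
          have h1 : (z • B a i (j:ℕ)) Vt.star = 0 := by
            rw [B_of_lt a i j.isLt]; simp [gen, Finsupp.single_apply]
          have h2 : (z • B a i (j:ℕ)) Vt.one = 0 := by
            rw [B_of_lt a i j.isLt]; simp [gen, Finsupp.single_apply]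
          rw [h1, h2]
          module

end Ell
section Chi

variable (a : Fin 3 → ℕ) (χ : Lt a →ₗ[ℤ] Lt a →ₗ[ℤ] ℤ)

lemma Iform_delta_right (x : Lt a) : Iform a x (delta a) = 0 := by
  induction x using Finsupp.induction_linear with
  | zero => exact Iform_zero_left a _
  | add x y ihx ihy => rw [Iform_add_left, ihx, ihy]; ring
  | single v z =>
      have hs : Finsupp.single v z = z • gen a v := by
        rw [gen, Finsupp.smul_single', mul_one]
      rw [hs, Iform_smul_left, Iform_gen_delta, mul_zero]

lemma chi_II (hχ : IsEulerForm a χ) (x y : Lt a) :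
    χ x (y - coxeter a y) = Iform a x y := by
  have h1 := hχ.1 x y
  have h2 := hχ.2 y x
  rw [map_sub]
  linarith

lemma chi_xd (hχ : IsEulerForm a χ) (x : Lt a) :
    χ x (delta a) = - χ (delta a) x := by
  have h1 := hχ.1 x (delta a)
  rw [Iform_delta_right] at h1
  linarith

lemma chi_dd (hχ : IsEulerForm a χ) : χ (delta a) (delta a) = 0 := by
  have h1 := hχ.1 (delta a) (delta a)
  rw [Iform_delta_right] at h1
  linarith

lemma chi_inv (hχ : IsEulerForm a χ) (x y : Lt a) :
    χ x y = χ (coxeter a x) (coxeter a y) := by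
  have h1 := hχ.2 x y
  have h2 := hχ.2 y (coxeter a x)
  linarith

lemma chi_iter (hχ : IsEulerForm a χ) (n : ℕ) (x y : Lt a) :
    χ x y = χ ((coxeter a)^[n] x) ((coxeter a)^[n] y) := by
  induction n with
  | zero => rfl
  | succ n ih =>
      rw [Function.iterate_succ_apply', Function.iterate_succ_apply', ih]
      exact chi_inv a χ hχ _ _

lemma key_prop (hχ : IsEulerForm a χ) (hai : ∀ i, 0 < a i) (ℓ : ℕ)
    (hdvd : ∀ i, a i ∣ ℓ) (hpos : 0 < ℓ) (k : ℤ)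
    (hk : k = ((ℓ / a 0 + ℓ / a 1 + ℓ / a 2 : ℕ) : ℤ) - (ℓ : ℤ)) (hkne : k ≠ 0)
    (x y : Lt a) :
    (x Vt.star + x Vt.one) * χ (delta a) y
      = (y Vt.star + y Vt.one) * χ (delta a) x := by
  have h := chi_iter a χ hχ ℓ x y
  rw [cox_iter_formula a hai ℓ hdvd hpos k hk x,
    cox_iter_formula a hai ℓ hdvd hpos k hk y] at h
  simp only [map_add, map_smul, LinearMap.add_apply, LinearMap.smul_apply,
    smul_eq_mul] at h
  rw [chi_dd a χ hχ, chi_xd a χ hχ x] at h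
  have hc : k * ((x Vt.star + x Vt.one) * χ (delta a) y)
      = k * ((y Vt.star + y Vt.one) * χ (delta a) x) := by linear_combination -h
  exact mul_left_cancel₀ hkne hc

lemma arm_key (hχ : IsEulerForm a χ) (hai : ∀ i, 0 < a i) (i : Fin 3) :
    (a i : ℤ) * (χ (gen a Vt.star) (E a i 0) + 1)
      = 1 - χ (delta a) (gen a Vt.star) := by
  obtain ⟨m, hm⟩ : ∃ m, a i = m + 1 := ⟨a i - 1, by have := hai i; omega⟩
  have hm1 : a i - 1 = m := by omega
  set p := χ (delta a) (gen a Vt.star) with hp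
  have hgsd : χ (gen a Vt.star) (delta a) = -p := chi_xd a χ hχ _
  rcases Nat.eq_zero_or_pos m with h0 | h0
  · -- empty arm : E i 0 = δ
    rw [E, if_neg (by omega), S_zero a i (by omega), sub_zero, hgsd, hm, h0]
    push_cast
    ring
  · -- nonempty arm
    have hAE : E a i 0 = B a i 0 := by rw [E, if_pos (by omega)]
    set u0 := χ (gen a Vt.star) (B a i 0) with hu0
    -- flat part
    have flat : ∀ t, 1 ≤ t → t < a i - 1 → χ (gen a Vt.star) (B a i t) = u0 + 1 := by
      intro t
      induction t with
      | zero => omega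
      | succ t ih =>
          intro _ hlt
          have rel := chi_II a χ hχ (gen a Vt.star) (B a i t)
          rw [cox_B a i hlt, map_sub, Iform_star_B] at rel
          rcases Nat.eq_zero_or_pos t with ht0 | ht0
          · subst ht0
            rw [if_pos ⟨rfl, by omega⟩] at rel
            linarith
          · rw [if_neg (by omega)] at rel
            rw [ih ht0 (by omega)] at rel
            linarith
    -- sum over the arm
    have hsum : ∑ t ∈ Finset.range (a i - 1), χ (gen a Vt.star) (B a i t)
        = (m : ℤ) * (u0 + 1) - 1 := by
      have hcongr : ∀ t ∈ Finset.range (a i - 1),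
          χ (gen a Vt.star) (B a i t) = (u0 + 1) - (if t = 0 then 1 else 0) := by
        intro t ht
        rcases Nat.eq_zero_or_pos t with ht0 | ht0
        · subst ht0; rw [if_pos rfl]; ring
        · rw [flat t ht0 (Finset.mem_range.1 ht), if_neg (by omega)]; ring
      rw [Finset.sum_congr rfl hcongr, Finset.sum_sub_distrib, Finset.sum_const,
        Finset.sum_ite_eq' (Finset.range (a i - 1)) 0 (fun _ => (1:ℤ)),
        if_pos (Finset.mem_range.2 (by omega)), Finset.card_range, hm1]
      push_cast
      ring
    -- last reflection relation
    have hb := chi_II a χ hχ (gen a Vt.star) (B a i (a i - 1 - 1))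
    rw [cox_B_last a i (by omega), map_sub, map_sub, hgsd, Iform_star_B] at hb
    have hS : χ (gen a Vt.star) (S a i)
        = ∑ t ∈ Finset.range (a i - 1), χ (gen a Vt.star) (B a i t) := by
      rw [S, map_sum]
    rw [hS, hsum] at hb
    rw [hAE, ← hu0, hm]
    rcases Nat.eq_zero_or_pos (m - 1) with hm2 | hm2
    · -- m = 1
      have hm'' : m = 1 := by omega
      rw [hm''] at hb ⊢
      rw [if_pos (by constructor <;> omega)] at hb
      push_cast at hb ⊢
      have : a i - 1 - 1 = 0 := by omega
      rw [this, ← hu0] at hb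
      linarith
    · -- m ≥ 2
      rw [if_neg (by omega)] at hb
      have hlast : χ (gen a Vt.star) (B a i (a i - 1 - 1)) = u0 + 1 :=
        flat (a i - 1 - 1) (by omega) (by omega)
      rw [hlast] at hb
      push_cast
      push_cast at hb
      linear_combination hb

lemma psi_star (hχ : IsEulerForm a χ) (hai : ∀ i, 0 < a i)
    (hA : 1 < (a 0 : ℚ)⁻¹ + (a 1 : ℚ)⁻¹ + (a 2 : ℚ)⁻¹) :
    χ (delta a) (gen a Vt.star) = 1 := by
  set p := χ (delta a) (gen a Vt.star) with hp
  set q0 := χ (gen a Vt.star) (E a 0 0) with hq0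
  set q1 := χ (gen a Vt.star) (E a 1 0) with hq1
  set q2 := χ (gen a Vt.star) (E a 2 0) with hq2
  have h0 := arm_key a χ hχ hai 0
  have h1 := arm_key a χ hχ hai 1
  have h2 := arm_key a χ hχ hai 2
  rw [← hq0, ← hp] at h0
  rw [← hq1, ← hp] at h1
  rw [← hq2, ← hp] at h2
  -- the final relation from y = gen star
  have hfin : -p - (q0 + q1 + q2) = 2 := by
    have hfe := chi_II a χ hχ (gen a Vt.star) (gen a Vt.star)
    rw [cox_star, Iform_gen_gen] at hfe
    have hcs : cartan a Vt.star Vt.star = 2 := rfl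
    rw [hcs] at hfe
    have hre : gen a Vt.star - (gen a Vt.one + E a 0 0 + E a 1 0 + E a 2 0)
        = delta a - E a 0 0 - E a 1 0 - E a 2 0 := by
      rw [delta]; module
    rw [hre, map_sub, map_sub, map_sub, chi_xd a χ hχ] at hfe
    rw [← hp, ← hq0, ← hq1, ← hq2] at hfe
    linarith
  -- the numerical inequality from hA
  have ha0 : (0:ℚ) < a 0 := by exact_mod_cast hai 0
  have ha1 : (0:ℚ) < a 1 := by exact_mod_cast hai 1
  have ha2 : (0:ℚ) < a 2 := by exact_mod_cast hai 2
  have hineq : (a 0 : ℚ) * a 1 * a 2 < a 1 * a 2 + a 0 * a 2 + a 0 * a 1 := by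
    have e0 : (a 0 : ℚ)⁻¹ * (a 0 * a 1 * a 2) = a 1 * a 2 := by
      field_simp
      try ring
    have e1 : (a 1 : ℚ)⁻¹ * (a 0 * a 1 * a 2) = a 0 * a 2 := by
      field_simp
      try ring
    have e2 : (a 2 : ℚ)⁻¹ * (a 0 * a 1 * a 2) = a 0 * a 1 := by
      field_simp
      try ring
    nlinarith [mul_pos (mul_pos ha0 ha1) ha2]
  have hineqZ : (a 0 : ℤ) * a 1 * a 2 < a 1 * a 2 + a 0 * a 2 + a 0 * a 1 := by
    exact_mod_cast hineq
  have key : (1 - p) * ((a 0 : ℤ) * a 1 * a 2 - (a 1 * a 2 + a 0 * a 2 + a 0 * a 1))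
      = 0 := by
    linear_combination ((a 1 : ℤ) * a 2) * h0 + ((a 0 : ℤ) * a 2) * h1
      + ((a 0 : ℤ) * a 1) * h2 - ((a 0 : ℤ) * a 1 * a 2) * (by linarith : (q0 + 1) + (q1 + 1) + (q2 + 1) = 1 - p)
  have hne : (a 0 : ℤ) * a 1 * a 2 - (a 1 * a 2 + a 0 * a 2 + a 0 * a 1) ≠ 0 := ne_of_lt (by linarith)
  have : 1 - p = 0 := by
    rcases mul_eq_zero.1 key with h | h
    · exact h
    · exact absurd h hne
  linarith

lemma psi_eq (hχ : IsEulerForm a χ) (hai : ∀ i, 0 < a i)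
    (hA : 1 < (a 0 : ℚ)⁻¹ + (a 1 : ℚ)⁻¹ + (a 2 : ℚ)⁻¹) (ℓ : ℕ)
    (hdvd : ∀ i, a i ∣ ℓ) (hpos : 0 < ℓ) (k : ℤ)
    (hk : k = ((ℓ / a 0 + ℓ / a 1 + ℓ / a 2 : ℕ) : ℤ) - (ℓ : ℤ)) (hkne : k ≠ 0)
    (y : Lt a) : χ (delta a) y = y Vt.star + y Vt.one := by
  have h := key_prop a χ hχ hai ℓ hdvd hpos k hk hkne (gen a Vt.star) y
  have hco : (gen a Vt.star) Vt.star = 1 := Finsupp.single_eq_same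
  have hco2 : (gen a Vt.star) Vt.one = 0 :=
    Finsupp.single_eq_of_ne' (by simp)
  rw [hco, hco2, psi_star a χ hχ hai hA] at h
  linarith

end Chi
/-- **`c̃_A^{ℓ_A} = t_δ^{−k}`** (Proposition 4.10 (3) of the paper): with
`ℓ = lcm(a₁,a₂,a₃)` and `k = ℓ/a₁ + ℓ/a₂ + ℓ/a₃ − ℓ` one has `k > 0`,
`k = χ_A · ℓ` (where `χ_A = 1/a₁ + 1/a₂ + 1/a₃ − 1`), and
`c̃_A^ℓ(x) = x + k χ(δ,x) δ = t_δ^{−k}(x)` for all `x ∈ L̃`. -/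
theorem coxeter_lcm_eq_twist_pow (a : Fin 3 → ℕ) (ha : ∀ i, 0 < a i)
    (hA : 1 < (a 0 : ℚ)⁻¹ + (a 1 : ℚ)⁻¹ + (a 2 : ℚ)⁻¹)
    (χ : Lt a →ₗ[ℤ] Lt a →ₗ[ℤ] ℤ) (hχ : IsEulerForm a χ)
    (ℓ : ℕ) (hℓ : ℓ = Nat.lcm (Nat.lcm (a 0) (a 1)) (a 2))
    (k : ℤ) (hk : k = ((ℓ / a 0 + ℓ / a 1 + ℓ / a 2 : ℕ) : ℤ) - (ℓ : ℤ)) :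
    0 < k ∧
    (k : ℚ) = ((a 0 : ℚ)⁻¹ + (a 1 : ℚ)⁻¹ + (a 2 : ℚ)⁻¹ - 1) * (ℓ : ℚ) ∧
    (∀ x : Lt a, (coxeter a)^[ℓ] x = x + (k * χ (delta a) x) • delta a) := by
  have hdvd : ∀ i, a i ∣ ℓ := by
    intro i
    rw [hℓ]
    rcases i with ⟨iv, hi⟩
    interval_cases iv
    · exact dvd_trans (Nat.dvd_lcm_left _ _) (Nat.dvd_lcm_left _ _)
    · exact dvd_trans (Nat.dvd_lcm_right _ _) (Nat.dvd_lcm_left _ _)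
    · exact Nat.dvd_lcm_right _ _
  have hpos : 0 < ℓ := by
    rw [hℓ]
    have h0 := ha 0
    have h1 := ha 1
    have h2 := ha 2
    exact Nat.pos_of_ne_zero (Nat.lcm_ne_zero (Nat.lcm_ne_zero h0.ne' h1.ne') h2.ne')
  have hcast : ∀ i : Fin 3, ((ℓ / a i : ℕ) : ℚ) = (ℓ : ℚ) * ((a i : ℚ))⁻¹ := by
    intro i
    rw [Nat.cast_div (hdvd i) (by exact_mod_cast (ha i).ne'), div_eq_mul_inv]
  have part2 : (k : ℚ) = ((a 0 : ℚ)⁻¹ + (a 1 : ℚ)⁻¹ + (a 2 : ℚ)⁻¹ - 1) * (ℓ : ℚ) := by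
    rw [hk, Int.cast_sub, Int.cast_natCast, Int.cast_natCast, Nat.cast_add, Nat.cast_add,
      hcast 0, hcast 1, hcast 2]
    ring
  have part1 : 0 < k := by
    have hQ : (0:ℚ) < (k:ℚ) := by
      rw [part2]
      apply mul_pos
      · linarith
      · exact_mod_cast hpos
    exact_mod_cast hQ
  refine ⟨part1, part2, ?_⟩
  intro x
  rw [cox_iter_formula a ha ℓ hdvd hpos k hk x,
    psi_eq a χ hχ ha hA ℓ hdvd hpos k hk (ne_of_gt part1) x, mul_comm]

end
end AffineGRS
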